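/- Let g : [0,1] → ℝ and f : [0,1] → ℝ be of bounded variation, let Z ⊆ [0,1] be an interval, let ψ : J → Z be a monotone bijection from an interval J ⊆ [0,1], and let ν be a probability measure on [0,1] with ν(Z) > 0. Then var( 1_J · ((f·g) ∘ ψ) ) ≤ 9 sup_Z|g| · var_Z(f) + 8 sup_Z|g| · ν(|f|·1_Z)/ν(Z), provided var_Z(g) ≤ 2 sup_Z|g|. -/

import Mathlib

open MeasureTheory Set
open scoped ENNReal NNReal

private lemma sum_if_le {n a : ℕ} {C : ℝ≥0∞} :
    (∑ i ∈ Finset.range n, (if i + 1 = a then C else 0)) ≤ C := by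
  rcases a with _ | b
  · simp
  · have : ∀ i, (if i + 1 = b + 1 then C else 0) = (if i = b then C else 0) := by
      intro i; simp [Nat.succ_inj]
    simp only [this]
    rw [Finset.sum_ite_eq' (Finset.range n) b (fun _ => C)]
    split_ifs <;> simp

/-- One-sided indicator variation bound: if the part of `s` outside `K` lies strictly
below `K`, then the variation of `1_K F` on `s` is at most the variation of `F` on `K`
plus one boundary jump. -/
private lemma evar_indicator_le_left {F : ℝ → ℝ} {s K : Set ℝ}
    (hbelow : ∀ x ∈ s, x ∉ K → ∀ y ∈ K, x < y)
    {C : ℝ≥0∞} (hC : ∀ y ∈ K, (‖F y‖₊ : ℝ≥0∞) ≤ C) :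
    eVariationOn (Set.indicator K F) s ≤ eVariationOn F K + C := by
  classical
  apply iSup_le
  rintro ⟨n, u, hu, us⟩
  dsimp only
  by_cases hA : ∃ i, u i ∈ K
  · set a := Nat.find hA with ha_def
    have haK : u a ∈ K := Nat.find_spec hA
    have hup : ∀ i, a ≤ i → u i ∈ K := by
      intro i hi
      by_contra hi'
      exact absurd (hu hi) (not_le.mpr (hbelow (u i) (us i) hi' (u a) haK))
    set w : ℕ → ℝ := fun i => u (max i a) with hw_def
    have hwmono : Monotone w := fun i j hij => hu (max_le_max hij le_rfl)
    have hwK : ∀ i, w i ∈ K := fun i => hup _ (le_max_right i a)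
    have key : ∀ i, edist (Set.indicator K F (u (i + 1))) (Set.indicator K F (u i)) ≤
        (if i + 1 = a then C else 0) + edist (F (w (i + 1))) (F (w i)) := by
      intro i
      rcases le_or_gt a i with hi | hi
      · have h1 : u i ∈ K := hup i hi
        have h2 : u (i + 1) ∈ K := hup _ (hi.trans (Nat.le_succ i))
        have e1 : max i a = i := max_eq_left hi
        have e2 : max (i + 1) a = i + 1 := max_eq_left (hi.trans (Nat.le_succ i))
        rw [Set.indicator_of_mem h1, Set.indicator_of_mem h2]
        simp only [hw_def, e1, e2]
        exact le_add_self
      · have h1 : u i ∉ K := Nat.find_min hA hi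
        rw [Set.indicator_of_notMem h1]
        rcases eq_or_lt_of_le (Nat.succ_le_of_lt hi) with heq | hlt
        · have h2 : u (i + 1) ∈ K := by rw [show i + 1 = a from heq]; exact haK
          rw [Set.indicator_of_mem h2, if_pos heq]
          have : edist (F (u (i + 1))) (0 : ℝ) = (‖F (u (i + 1))‖₊ : ℝ≥0∞) := by
            rw [edist_eq_enorm_sub, sub_zero, enorm_eq_nnnorm]
          rw [this]
          exact le_add_right (hC _ h2)
        · have h2 : u (i + 1) ∉ K := Nat.find_min hA hlt
          rw [Set.indicator_of_notMem h2, edist_self]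
          exact zero_le
    calc (∑ i ∈ Finset.range n, edist (Set.indicator K F (u (i + 1)))
            (Set.indicator K F (u i)))
        ≤ ∑ i ∈ Finset.range n,
            ((if i + 1 = a then C else 0) + edist (F (w (i + 1))) (F (w i))) :=
          Finset.sum_le_sum fun i _ => key i
      _ = (∑ i ∈ Finset.range n, (if i + 1 = a then C else 0)) +
            ∑ i ∈ Finset.range n, edist (F (w (i + 1))) (F (w i)) :=
          Finset.sum_add_distrib
      _ ≤ C + eVariationOn F K :=
          add_le_add sum_if_le (eVariationOn.sum_le (n := n) hwmono hwK)
      _ = eVariationOn F K + C := add_comm _ _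
  · push_neg at hA
    have hz : ∀ i, Set.indicator K F (u i) = 0 := fun i =>
      Set.indicator_of_notMem (hA i) F
    have : (∑ i ∈ Finset.range n, edist (Set.indicator K F (u (i + 1)))
        (Set.indicator K F (u i))) = 0 :=
      Finset.sum_eq_zero fun i _ => by rw [hz, hz, edist_self]
    rw [this]
    exact zero_le

/-- Mirror image of `evar_indicator_le_left`. -/
private lemma evar_indicator_le_right {F : ℝ → ℝ} {s K : Set ℝ}
    (habove : ∀ x ∈ s, x ∉ K → ∀ y ∈ K, y < x)
    {C : ℝ≥0∞} (hC : ∀ y ∈ K, (‖F y‖₊ : ℝ≥0∞) ≤ C) :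
    eVariationOn (Set.indicator K F) s ≤ eVariationOn F K + C := by
  have hnegs : AntitoneOn (fun x : ℝ => -x) (-s) := fun x _ y _ hxy => neg_le_neg hxy
  have hnegK : AntitoneOn (fun x : ℝ => -x) (-K) := fun x _ y _ hxy => neg_le_neg hxy
  have himgs : (fun x : ℝ => -x) '' (-s) = s := by
    ext x; simp [Set.mem_neg]
  have himgK : (fun x : ℝ => -x) '' (-K) = K := by
    ext x; simp [Set.mem_neg]
  have h1 : eVariationOn (Set.indicator K F) s
      = eVariationOn ((Set.indicator K F) ∘ fun x : ℝ => -x) (-s) := by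
    rw [eVariationOn.comp_eq_of_antitoneOn _ _ hnegs, himgs]
  have h2 : ((Set.indicator K F) ∘ fun x : ℝ => -x)
      = Set.indicator (-K) (F ∘ fun x : ℝ => -x) := by
    funext x
    by_cases hx : x ∈ -K
    · rw [Function.comp_apply, Set.indicator_of_mem hx, Function.comp_apply,
        Set.indicator_of_mem (Set.mem_neg.mp hx)]
    · rw [Function.comp_apply, Set.indicator_of_notMem hx,
        Set.indicator_of_notMem (fun h => hx (Set.mem_neg.mpr h))]
  have h3 : eVariationOn (F ∘ fun x : ℝ => -x) (-K) = eVariationOn F K := by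
    rw [eVariationOn.comp_eq_of_antitoneOn _ _ hnegK, himgK]
  rw [h1, h2, ← h3]
  apply evar_indicator_le_left
  · intro x hx hx' y hy
    have h4 : -x ∈ s := Set.mem_neg.mp hx
    have h5 : -x ∉ K := fun h => hx' (Set.mem_neg.mpr h)
    have h6 : -y ∈ K := Set.mem_neg.mp hy
    have := habove (-x) h4 h5 (-y) h6
    linarith
  · intro y hy
    exact hC _ (Set.mem_neg.mp hy)

/-- Variation of a product is bounded via sup bounds on the factors. -/
private lemma evar_mul_le {f g : ℝ → ℝ} {Z : Set ℝ} {Cf Cg : ℝ≥0∞}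
    (hfb : ∀ x ∈ Z, (‖f x‖₊ : ℝ≥0∞) ≤ Cf) (hgb : ∀ x ∈ Z, (‖g x‖₊ : ℝ≥0∞) ≤ Cg) :
    eVariationOn (fun x => f x * g x) Z ≤
      Cg * eVariationOn f Z + Cf * eVariationOn g Z := by
  apply iSup_le
  rintro ⟨n, u, hu, us⟩
  dsimp only
  have key : ∀ i, edist (f (u (i + 1)) * g (u (i + 1))) (f (u i) * g (u i)) ≤
      Cg * edist (f (u (i + 1))) (f (u i)) + Cf * edist (g (u (i + 1))) (g (u i)) := by
    intro i
    rw [edist_eq_enorm_sub, edist_eq_enorm_sub, edist_eq_enorm_sub, enorm_eq_nnnorm,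
      enorm_eq_nnnorm, enorm_eq_nnnorm]
    have hsplit : f (u (i + 1)) * g (u (i + 1)) - f (u i) * g (u i)
        = (f (u (i + 1)) - f (u i)) * g (u (i + 1)) + f (u i) * (g (u (i + 1)) - g (u i)) := by
      ring
    rw [hsplit]
    calc ((‖(f (u (i + 1)) - f (u i)) * g (u (i + 1)) +
            f (u i) * (g (u (i + 1)) - g (u i))‖₊ : ℝ≥0∞))
        ≤ (‖(f (u (i + 1)) - f (u i)) * g (u (i + 1))‖₊ : ℝ≥0∞) +
            (‖f (u i) * (g (u (i + 1)) - g (u i))‖₊ : ℝ≥0∞) := by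
          exact_mod_cast nnnorm_add_le _ _
      _ = (‖f (u (i + 1)) - f (u i)‖₊ : ℝ≥0∞) * (‖g (u (i + 1))‖₊ : ℝ≥0∞) +
            (‖f (u i)‖₊ : ℝ≥0∞) * (‖g (u (i + 1)) - g (u i)‖₊ : ℝ≥0∞) := by
          rw [nnnorm_mul, nnnorm_mul, ENNReal.coe_mul, ENNReal.coe_mul]
      _ ≤ Cg * (‖f (u (i + 1)) - f (u i)‖₊ : ℝ≥0∞) +
            Cf * (‖g (u (i + 1)) - g (u i)‖₊ : ℝ≥0∞) := by
          refine add_le_add ?_ ?_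
          · rw [mul_comm Cg]
            exact mul_le_mul_right (hgb _ (us _)) _
          · exact mul_le_mul_left (hfb _ (us _)) _
  calc (∑ i ∈ Finset.range n, edist (f (u (i + 1)) * g (u (i + 1))) (f (u i) * g (u i)))
      ≤ ∑ i ∈ Finset.range n, (Cg * edist (f (u (i + 1))) (f (u i)) +
          Cf * edist (g (u (i + 1))) (g (u i))) := Finset.sum_le_sum fun i _ => key i
    _ = Cg * ∑ i ∈ Finset.range n, edist (f (u (i + 1))) (f (u i)) +
          Cf * ∑ i ∈ Finset.range n, edist (g (u (i + 1))) (g (u i)) := by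
        rw [Finset.sum_add_distrib, Finset.mul_sum, Finset.mul_sum]
    _ ≤ Cg * eVariationOn f Z + Cf * eVariationOn g Z :=
        add_le_add (mul_le_mul_right (eVariationOn.sum_le (f := f) (n := n) hu us) _)
          (mul_le_mul_right (eVariationOn.sum_le (f := g) (n := n) hu us) _)

/-- Single-branch building block of the Lasota–Yorke inequality: for `f, g` of bounded
variation on `[0,1]`, an interval `Z ⊆ [0,1]`, a monotone bijection `ψ : J → Z` from an
interval `J ⊆ [0,1]`, and a probability measure `ν` with `ν(Z) > 0`, provided
`var_Z(g) ≤ 2 sup_Z|g|` one has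
`var(1_J · ((f·g)∘ψ)) ≤ 9 sup_Z|g| var_Z(f) + 8 sup_Z|g| ν(|f|·1_Z)/ν(Z)`. -/
theorem stmt10 (f g : ℝ → ℝ)
    (hf : BoundedVariationOn f (Set.Icc 0 1)) (hg : BoundedVariationOn g (Set.Icc 0 1))
    (Z J : Set ℝ) (hZsub : Z ⊆ Set.Icc 0 1) (hZconn : Z.OrdConnected) (hZne : Z.Nonempty)
    (hZmeas : MeasurableSet Z)
    (hJsub : J ⊆ Set.Icc 0 1) (hJconn : J.OrdConnected)
    (ψ : ℝ → ℝ) (hψ : Set.BijOn ψ J Z)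
    (hψmono : StrictMonoOn ψ J ∨ StrictAntiOn ψ J)
    (ν : Measure ℝ) [IsProbabilityMeasure ν] (hνZ : 0 < ν Z)
    (hvarg : (eVariationOn g Z).toReal ≤ 2 * sSup ((fun x => |g x|) '' Z)) :
    (eVariationOn (Set.indicator J fun y => f (ψ y) * g (ψ y)) (Set.Icc 0 1)).toReal ≤
      9 * sSup ((fun x => |g x|) '' Z) * (eVariationOn f Z).toReal +
        8 * sSup ((fun x => |g x|) '' Z) * ((∫ x in Z, |f x| ∂ν) / (ν Z).toReal) := by
  obtain ⟨z0, hz0⟩ := hZne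
  set Mg := sSup ((fun x => |g x|) '' Z) with hMg_def
  set Mf := sSup ((fun x => |f x|) '' Z) with hMf_def
  have hfZ : BoundedVariationOn f Z := hf.mono hZsub
  have hgZ : BoundedVariationOn g Z := hg.mono hZsub
  set Vf := (eVariationOn f Z).toReal with hVf_def
  set Vg := (eVariationOn g Z).toReal with hVg_def
  -- distance bounds from the variation
  have distf : ∀ x ∈ Z, ∀ y ∈ Z, |f x - f y| ≤ Vf := by
    intro x hx y hy
    have h := eVariationOn.edist_le f hx hy
    rw [edist_dist] at h
    have h2 := (ENNReal.ofReal_le_iff_le_toReal hfZ).mp h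
    rwa [Real.dist_eq] at h2
  have distg : ∀ x ∈ Z, ∀ y ∈ Z, |g x - g y| ≤ Vg := by
    intro x hx y hy
    have h := eVariationOn.edist_le g hx hy
    rw [edist_dist] at h
    have h2 := (ENNReal.ofReal_le_iff_le_toReal hgZ).mp h
    rwa [Real.dist_eq] at h2
  have hbddf : ∀ x ∈ Z, |f x| ≤ |f z0| + Vf := by
    intro x hx
    have h1 := distf x hx z0 hz0
    have h2 := abs_sub_abs_le_abs_sub (f x) (f z0)
    linarith
  have hbddg : ∀ x ∈ Z, |g x| ≤ |g z0| + Vg := by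
    intro x hx
    have h1 := distg x hx z0 hz0
    have h2 := abs_sub_abs_le_abs_sub (g x) (g z0)
    linarith
  have hBf : BddAbove ((fun x => |f x|) '' Z) :=
    ⟨|f z0| + Vf, by rintro _ ⟨x, hx, rfl⟩; exact hbddf x hx⟩
  have hBg : BddAbove ((fun x => |g x|) '' Z) :=
    ⟨|g z0| + Vg, by rintro _ ⟨x, hx, rfl⟩; exact hbddg x hx⟩
  have hMf_le : ∀ x ∈ Z, |f x| ≤ Mf := fun x hx => le_csSup hBf ⟨x, hx, rfl⟩
  have hMg_le : ∀ x ∈ Z, |g x| ≤ Mg := fun x hx => le_csSup hBg ⟨x, hx, rfl⟩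
  have hMf0 : 0 ≤ Mf := le_trans (abs_nonneg _) (hMf_le z0 hz0)
  have hMg0 : 0 ≤ Mg := le_trans (abs_nonneg _) (hMg_le z0 hz0)
  set Cf := ENNReal.ofReal Mf with hCf_def
  set Cg := ENNReal.ofReal Mg with hCg_def
  have hCf : ∀ x ∈ Z, (‖f x‖₊ : ℝ≥0∞) ≤ Cf := by
    intro x hx
    rw [← enorm_eq_nnnorm, ← ofReal_norm]
    exact ENNReal.ofReal_le_ofReal (by simpa [Real.norm_eq_abs] using hMf_le x hx)
  have hCg : ∀ x ∈ Z, (‖g x‖₊ : ℝ≥0∞) ≤ Cg := by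
    intro x hx
    rw [← enorm_eq_nnnorm, ← ofReal_norm]
    exact ENNReal.ofReal_le_ofReal (by simpa [Real.norm_eq_abs] using hMg_le x hx)
  -- a point of J
  have hJne : J.Nonempty := by
    obtain ⟨m, hm, -⟩ := hψ.surjOn hz0
    exact ⟨m, hm⟩
  obtain ⟨m, hmJ⟩ := hJne
  have hm01 : m ∈ Set.Icc (0 : ℝ) 1 := hJsub hmJ
  set F : ℝ → ℝ := fun y => f (ψ y) * g (ψ y) with hF_def
  -- composition: variation of F on J is variation of f*g on Z
  have hcomp : eVariationOn F J = eVariationOn (fun x => f x * g x) Z := by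
    have himg : ψ '' J = Z := hψ.image_eq
    rcases hψmono with hmono | hanti
    · rw [show F = (fun x => f x * g x) ∘ ψ from rfl,
        eVariationOn.comp_eq_of_monotoneOn _ _ hmono.monotoneOn, himg]
    · rw [show F = (fun x => f x * g x) ∘ ψ from rfl,
        eVariationOn.comp_eq_of_antitoneOn _ _ hanti.antitoneOn, himg]
  -- sup bound for F on subsets of J
  have hFC : ∀ y ∈ J, (‖F y‖₊ : ℝ≥0∞) ≤ Cf * Cg := by
    intro y hy
    have hz : ψ y ∈ Z := hψ.mapsTo hy
    show (‖f (ψ y) * g (ψ y)‖₊ : ℝ≥0∞) ≤ Cf * Cg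
    rw [nnnorm_mul, ENNReal.coe_mul]
    exact mul_le_mul' (hCf _ hz) (hCg _ hz)
  -- split [0,1] at m
  have hsplit : eVariationOn (Set.indicator J F) (Set.Icc 0 1) ≤
      eVariationOn (Set.indicator J F) (Set.Icc 0 m) +
        eVariationOn (Set.indicator J F) (Set.Icc m 1) := by
    have h := eVariationOn.Icc_add_Icc (Set.indicator J F) (s := Set.Icc (0 : ℝ) 1)
      hm01.1 hm01.2 hm01
    have e1 : Set.Icc (0 : ℝ) 1 ∩ Set.Icc 0 m = Set.Icc 0 m :=
      Set.inter_eq_self_of_subset_right (Set.Icc_subset_Icc le_rfl hm01.2)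
    have e2 : Set.Icc (0 : ℝ) 1 ∩ Set.Icc m 1 = Set.Icc m 1 :=
      Set.inter_eq_self_of_subset_right (Set.Icc_subset_Icc hm01.1 le_rfl)
    have e3 : Set.Icc (0 : ℝ) 1 ∩ Set.Icc 0 1 = Set.Icc 0 1 := Set.inter_self _
    rw [e1, e2, e3] at h
    exact le_of_eq h.symm
  -- left piece
  have hleft : eVariationOn (Set.indicator J F) (Set.Icc 0 m) ≤
      eVariationOn F (J ∩ Set.Iic m) + Cf * Cg := by
    have heq : Set.EqOn (Set.indicator J F) (Set.indicator (J ∩ Set.Iic m) F)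
        (Set.Icc 0 m) := by
      intro x hx
      by_cases hxJ : x ∈ J
      · rw [Set.indicator_of_mem hxJ, Set.indicator_of_mem (show x ∈ J ∩ Set.Iic m from ⟨hxJ, hx.2⟩)]
      · rw [Set.indicator_of_notMem hxJ, Set.indicator_of_notMem (fun h => hxJ h.1)]
    rw [eVariationOn.eq_of_eqOn heq]
    refine evar_indicator_le_left ?_ (fun y hy => hFC y hy.1)
    intro x hx hxK y hy
    have hxJ : x ∉ J := fun h => hxK ⟨h, hx.2⟩
    by_contra hxy
    push_neg at hxy
    exact hxJ (hJconn.out hy.1 hmJ ⟨hxy, hx.2⟩)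
  -- right piece
  have hright : eVariationOn (Set.indicator J F) (Set.Icc m 1) ≤
      eVariationOn F (J ∩ Set.Ici m) + Cf * Cg := by
    have heq : Set.EqOn (Set.indicator J F) (Set.indicator (J ∩ Set.Ici m) F)
        (Set.Icc m 1) := by
      intro x hx
      by_cases hxJ : x ∈ J
      · rw [Set.indicator_of_mem hxJ, Set.indicator_of_mem (show x ∈ J ∩ Set.Ici m from ⟨hxJ, hx.1⟩)]
      · rw [Set.indicator_of_notMem hxJ, Set.indicator_of_notMem (fun h => hxJ h.1)]
    rw [eVariationOn.eq_of_eqOn heq]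
    refine evar_indicator_le_right ?_ (fun y hy => hFC y hy.1)
    intro x hx hxK y hy
    have hxJ : x ∉ J := fun h => hxK ⟨h, hx.1⟩
    by_contra hxy
    push_neg at hxy
    exact hxJ (hJconn.out hmJ hy.1 ⟨hx.1, hxy⟩)
  -- glue the two halves of J
  have hunion : eVariationOn F (J ∩ Set.Iic m) + eVariationOn F (J ∩ Set.Ici m)
      = eVariationOn F J := by
    have hgr : IsGreatest (J ∩ Set.Iic m) m := ⟨⟨hmJ, Set.mem_Iic.mpr le_rfl⟩, fun x hx => Set.mem_Iic.mp hx.2⟩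
    have hle : IsLeast (J ∩ Set.Ici m) m := ⟨⟨hmJ, Set.mem_Ici.mpr le_rfl⟩, fun x hx => Set.mem_Ici.mp hx.2⟩
    rw [← eVariationOn.union F hgr hle, ← Set.inter_union_distrib_left,
      Set.Iic_union_Ici, Set.inter_univ]
  -- total ennreal bound
  have hprod : eVariationOn (fun x => f x * g x) Z ≤
      Cg * eVariationOn f Z + Cf * eVariationOn g Z := evar_mul_le hCf hCg
  have htot : eVariationOn (Set.indicator J F) (Set.Icc 0 1) ≤
      (Cg * eVariationOn f Z + Cf * eVariationOn g Z) + (Cf * Cg + Cf * Cg) := by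
    calc eVariationOn (Set.indicator J F) (Set.Icc 0 1)
        ≤ eVariationOn (Set.indicator J F) (Set.Icc 0 m) +
            eVariationOn (Set.indicator J F) (Set.Icc m 1) := hsplit
      _ ≤ (eVariationOn F (J ∩ Set.Iic m) + Cf * Cg) +
            (eVariationOn F (J ∩ Set.Ici m) + Cf * Cg) := add_le_add hleft hright
      _ = (eVariationOn F (J ∩ Set.Iic m) + eVariationOn F (J ∩ Set.Ici m)) +
            (Cf * Cg + Cf * Cg) := by ring
      _ = eVariationOn (fun x => f x * g x) Z + (Cf * Cg + Cf * Cg) := by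
          rw [hunion, hcomp]
      _ ≤ (Cg * eVariationOn f Z + Cf * eVariationOn g Z) + (Cf * Cg + Cf * Cg) :=
          add_le_add_left hprod _
  -- finiteness
  have hCf_ne : Cf ≠ ⊤ := ENNReal.ofReal_ne_top
  have hCg_ne : Cg ≠ ⊤ := ENNReal.ofReal_ne_top
  have hRHS_ne : (Cg * eVariationOn f Z + Cf * eVariationOn g Z) + (Cf * Cg + Cf * Cg) ≠ ⊤ := by
    apply ENNReal.add_ne_top.mpr
    constructor
    · exact ENNReal.add_ne_top.mpr ⟨ENNReal.mul_ne_top hCg_ne hfZ, ENNReal.mul_ne_top hCf_ne hgZ⟩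
    · exact ENNReal.add_ne_top.mpr ⟨ENNReal.mul_ne_top hCf_ne hCg_ne,
        ENNReal.mul_ne_top hCf_ne hCg_ne⟩
  have hreal : (eVariationOn (Set.indicator J F) (Set.Icc 0 1)).toReal ≤
      (Mg * Vf + Mf * Vg) + (Mf * Mg + Mf * Mg) := by
    have h := ENNReal.toReal_mono hRHS_ne htot
    calc (eVariationOn (Set.indicator J F) (Set.Icc 0 1)).toReal
        ≤ ((Cg * eVariationOn f Z + Cf * eVariationOn g Z) + (Cf * Cg + Cf * Cg)).toReal := h
      _ = (Mg * Vf + Mf * Vg) + (Mf * Mg + Mf * Mg) := by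
          rw [ENNReal.toReal_add (ENNReal.add_ne_top.mpr ⟨ENNReal.mul_ne_top hCg_ne hfZ,
              ENNReal.mul_ne_top hCf_ne hgZ⟩)
              (ENNReal.add_ne_top.mpr ⟨ENNReal.mul_ne_top hCf_ne hCg_ne,
              ENNReal.mul_ne_top hCf_ne hCg_ne⟩),
            ENNReal.toReal_add (ENNReal.mul_ne_top hCg_ne hfZ) (ENNReal.mul_ne_top hCf_ne hgZ),
            ENNReal.toReal_add (ENNReal.mul_ne_top hCf_ne hCg_ne)
              (ENNReal.mul_ne_top hCf_ne hCg_ne),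
            ENNReal.toReal_mul, ENNReal.toReal_mul, ENNReal.toReal_mul,
            hCf_def, hCg_def, ENNReal.toReal_ofReal hMf0, ENNReal.toReal_ofReal hMg0]
  -- integrability of f on Z
  obtain ⟨p, q, hp, hq, hpq⟩ :=
    hf.locallyBoundedVariationOn.exists_monotoneOn_sub_monotoneOn
  have hmeasf : AEMeasurable f (ν.restrict Z) := by
    rw [hpq]
    exact (aemeasurable_restrict_of_monotoneOn hZmeas (hp.mono hZsub)).sub
      (aemeasurable_restrict_of_monotoneOn hZmeas (hq.mono hZsub))
  have hIntf : IntegrableOn f Z ν := by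
    refine Integrable.mono' (integrable_const Mf) hmeasf.aestronglyMeasurable ?_
    filter_upwards [ae_restrict_mem hZmeas] with x hx
    simpa [Real.norm_eq_abs] using hMf_le x hx
  have hIntabs : IntegrableOn (fun x => |f x|) Z ν := hIntf.abs
  have hνZreal : 0 < (ν Z).toReal := ENNReal.toReal_pos hνZ.ne' (measure_ne_top ν Z)
  set I := (∫ x in Z, |f x| ∂ν) / (ν Z).toReal with hI_def
  have hI0 : 0 ≤ I := div_nonneg
    (setIntegral_nonneg hZmeas fun x _ => abs_nonneg _) hνZreal.le
  -- sup ≤ var + mean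
  have hMfI : Mf ≤ Vf + I := by
    apply Real.sSup_le ?_ (add_nonneg ENNReal.toReal_nonneg hI0)
    rintro _ ⟨x, hx, rfl⟩
    have hkey : (|f x| - Vf) * (ν Z).toReal ≤ ∫ y in Z, |f y| ∂ν := by
      have hmono : (∫ _ in Z, (|f x| - Vf) ∂ν) ≤ ∫ y in Z, |f y| ∂ν := by
        refine setIntegral_mono_on (integrableOn_const (measure_ne_top ν Z))
          hIntabs hZmeas ?_
        intro y hy
        have h1 := distf x hx y hy
        have h2 := abs_sub_abs_le_abs_sub (f x) (f y)
        linarith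
      rwa [setIntegral_const, smul_eq_mul, mul_comm] at hmono
    have h3 : |f x| - Vf ≤ I := by
      rw [hI_def]
      exact (le_div_iff₀ hνZreal).mpr hkey
    linarith
  have hVf0 : 0 ≤ Vf := ENNReal.toReal_nonneg
  nlinarith [mul_nonneg hMg0 hVf0, mul_nonneg hMg0 hI0,
    mul_le_mul_of_nonneg_left hvarg hMf0, mul_le_mul_of_nonneg_right hMfI hMg0,
    mul_nonneg hMf0 hMg0]
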